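/- For singleton product families, the family-based semantics agrees with the product-based semantics: if environments ζ (state-family) and η (state-product) are related, i.e. (s,{p}) ∈ ζ(X) iff (s,p) ∈ η(X) for all X, then for every μL'f formula φ', state s, and product p, (s,{p}) ∈ ⟦φ'⟧'_F(ζ) if and only if (s,p) ∈ ⟦fm(φ')⟧_F(η). -/
import Mathlib


namespace SPLmu

/-- A feature transition system: `theta s a t` is the feature expression
(identified with the set of products satisfying it) guarding the transition. -/
structure FTS (S A P : Type) where
  theta : S → A → S → Set P
  init : S

/-- A labeled transition system. -/
structure LTS (S A : Type) where
  trans : S → A → S → Prop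
  init : S

/-- Projection of an FTS onto a product. -/
def FTS.proj {S A P : Type} (F : FTS S A P) (p : P) : LTS S A :=
  ⟨fun s a t => p ∈ F.theta s a t, F.init⟩

/-- Knaster–Tarski least (pre)fixpoint. -/
def slfp {α : Type} (f : Set α → Set α) : Set α := ⋂₀ {V | f V ⊆ V}

/-- Knaster–Tarski greatest (post)fixpoint. -/
def sgfp {α : Type} (f : Set α → Set α) : Set α := ⋃₀ {V | V ⊆ f V}

/-- The modal mu-calculus μL. -/
inductive MuL (A X : Type) : Type where
  | bot | top
  | neg : MuL A X → MuL A X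
  | or  : MuL A X → MuL A X → MuL A X
  | and : MuL A X → MuL A X → MuL A X
  | dia : A → MuL A X → MuL A X
  | box : A → MuL A X → MuL A X
  | var : X → MuL A X
  | mu  : X → MuL A X → MuL A X
  | nu  : X → MuL A X → MuL A X

/-- The feature mu-calculus μLf (also used as the syntax of μL'f, whose
modality ⟪a|χ⟫ corresponds to `dia`; the translation `fm` is then the identity). -/
inductive MuLf (A X P : Type) : Type where
  | bot | top
  | neg : MuLf A X P → MuLf A X P
  | or  : MuLf A X P → MuLf A X P → MuLf A X P
  | and : MuLf A X P → MuLf A X P → MuLf A X P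
  | dia : A → Set P → MuLf A X P → MuLf A X P
  | box : A → Set P → MuLf A X P → MuLf A X P
  | var : X → MuLf A X P
  | mu  : X → MuLf A X P → MuLf A X P
  | nu  : X → MuLf A X P → MuLf A X P

variable {S A X P : Type}

/-- Standard μL semantics over an LTS. -/
def MuL.sem [DecidableEq X] (L : LTS S A) : MuL A X → (X → Set S) → Set S
  | .bot, _ => ∅
  | .top, _ => Set.univ
  | .neg φ, ε => (MuL.sem L φ ε)ᶜ
  | .or φ ψ, ε => MuL.sem L φ ε ∪ MuL.sem L ψ ε
  | .and φ ψ, ε => MuL.sem L φ ε ∩ MuL.sem L ψ ε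
  | .dia a φ, ε => {s | ∃ t, L.trans s a t ∧ t ∈ MuL.sem L φ ε}
  | .box a φ, ε => {s | ∀ t, L.trans s a t → t ∈ MuL.sem L φ ε}
  | .var x, ε => ε x
  | .mu x φ, ε => slfp (fun V => MuL.sem L φ (Function.update ε x V))
  | .nu x φ, ε => sgfp (fun V => MuL.sem L φ (Function.update ε x V))

/-- Product-based μLf semantics over an FTS (sets of state-product pairs). -/
def MuLf.sem [DecidableEq X] (F : FTS S A P) : MuLf A X P → (X → Set (S × P)) → Set (S × P)
  | .bot, _ => ∅
  | .top, _ => Set.univ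
  | .neg φ, η => (MuLf.sem F φ η)ᶜ
  | .or φ ψ, η => MuLf.sem F φ η ∪ MuLf.sem F ψ η
  | .and φ ψ, η => MuLf.sem F φ η ∩ MuLf.sem F ψ η
  | .dia a χ φ, η =>
      {sp | sp.2 ∈ χ ∧ ∃ t, sp.2 ∈ F.theta sp.1 a t ∧ (t, sp.2) ∈ MuLf.sem F φ η}
  | .box a χ φ, η =>
      {sp | sp.2 ∈ χ → ∀ t, sp.2 ∈ F.theta sp.1 a t → (t, sp.2) ∈ MuLf.sem F φ η}
  | .var x, η => η x
  | .mu x φ, η => slfp (fun V => MuLf.sem F φ (Function.update η x V))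
  | .nu x φ, η => sgfp (fun V => MuLf.sem F φ (Function.update η x V))

/-- Family-based μL'f semantics over an FTS (sets of state-family pairs);
here `dia` plays the role of the family modality ⟪a|χ⟫. -/
def MuLf.fsem [DecidableEq X] (F : FTS S A P) :
    MuLf A X P → (X → Set (S × Set P)) → Set (S × Set P)
  | .bot, _ => ∅
  | .top, _ => Set.univ
  | .neg φ, ζ => (MuLf.fsem F φ ζ)ᶜ
  | .or φ ψ, ζ => MuLf.fsem F φ ζ ∪ MuLf.fsem F ψ ζ
  | .and φ ψ, ζ => MuLf.fsem F φ ζ ∩ MuLf.fsem F ψ ζ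
  | .dia a χ φ, ζ =>
      {sP | sP.2 ⊆ χ ∧ ∃ t, sP.2 ⊆ F.theta sP.1 a t ∧
        (t, sP.2 ∩ χ ∩ F.theta sP.1 a t) ∈ MuLf.fsem F φ ζ}
  | .box a χ φ, ζ =>
      {sP | (sP.2 ∩ χ).Nonempty → ∀ t, (sP.2 ∩ χ ∩ F.theta sP.1 a t).Nonempty →
        (t, sP.2 ∩ χ ∩ F.theta sP.1 a t) ∈ MuLf.fsem F φ ζ}
  | .var x, ζ => ζ x
  | .mu x φ, ζ => slfp (fun W => MuLf.fsem F φ (Function.update ζ x W))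
  | .nu x φ, ζ => sgfp (fun W => MuLf.fsem F φ (Function.update ζ x W))

-- The translation sm : μLf × 𝒫 → μL.
open Classical in
noncomputable def MuLf.sm : MuLf A X P → P → MuL A X
  | .bot, _ => .bot
  | .top, _ => .top
  | .neg φ, p => .neg (MuLf.sm φ p)
  | .or φ ψ, p => .or (MuLf.sm φ p) (MuLf.sm ψ p)
  | .and φ ψ, p => .and (MuLf.sm φ p) (MuLf.sm ψ p)
  | .dia a χ φ, p => if p ∈ χ then .dia a (MuLf.sm φ p) else .bot
  | .box a χ φ, p => if p ∈ χ then .box a (MuLf.sm φ p) else .top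
  | .var x, _ => .var x
  | .mu x φ, p => .mu x (MuLf.sm φ p)
  | .nu x φ, p => .nu x (MuLf.sm φ p)

/-- Free variables of a μLf formula. -/
def MuLf.fv : MuLf A X P → Set X
  | .bot => ∅
  | .top => ∅
  | .neg φ => MuLf.fv φ
  | .or φ ψ => MuLf.fv φ ∪ MuLf.fv ψ
  | .and φ ψ => MuLf.fv φ ∪ MuLf.fv ψ
  | .dia _ _ φ => MuLf.fv φ
  | .box _ _ φ => MuLf.fv φ
  | .var x => {x}
  | .mu x φ => MuLf.fv φ \ {x}
  | .nu x φ => MuLf.fv φ \ {x}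

/-- A μLf formula is closed if it has no free variables. -/
def MuLf.closed (φ : MuLf A X P) : Prop := MuLf.fv φ = ∅

/-- Negation-free μLf formulas. -/
def MuLf.negFree : MuLf A X P → Prop
  | .bot => True
  | .top => True
  | .neg _ => False
  | .or φ ψ => MuLf.negFree φ ∧ MuLf.negFree ψ
  | .and φ ψ => MuLf.negFree φ ∧ MuLf.negFree ψ
  | .dia _ _ φ => MuLf.negFree φ
  | .box _ _ φ => MuLf.negFree φ
  | .var _ => True
  | .mu _ φ => MuLf.negFree φ
  | .nu _ φ => MuLf.negFree φ

/-- Diamond-free μLf formulas (no ⟨a|χ⟩ / ⟪a|χ⟫). -/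
def MuLf.diaFree : MuLf A X P → Prop
  | .bot => True
  | .top => True
  | .neg φ => MuLf.diaFree φ
  | .or φ ψ => MuLf.diaFree φ ∧ MuLf.diaFree ψ
  | .and φ ψ => MuLf.diaFree φ ∧ MuLf.diaFree ψ
  | .dia _ _ _ => False
  | .box _ _ φ => MuLf.diaFree φ
  | .var _ => True
  | .mu _ φ => MuLf.diaFree φ
  | .nu _ φ => MuLf.diaFree φ

mutual
/-- All free occurrences of `x` are under an even number of negations. -/
def MuLf.posIn (x : X) : MuLf A X P → Prop
  | .bot => True
  | .top => True
  | .neg φ => MuLf.negOcc x φ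
  | .or φ ψ => MuLf.posIn x φ ∧ MuLf.posIn x ψ
  | .and φ ψ => MuLf.posIn x φ ∧ MuLf.posIn x ψ
  | .dia _ _ φ => MuLf.posIn x φ
  | .box _ _ φ => MuLf.posIn x φ
  | .var _ => True
  | .mu y φ => y = x ∨ MuLf.posIn x φ
  | .nu y φ => y = x ∨ MuLf.posIn x φ

/-- All free occurrences of `x` are under an odd number of negations. -/
def MuLf.negOcc (x : X) : MuLf A X P → Prop
  | .bot => True
  | .top => True
  | .neg φ => MuLf.posIn x φ
  | .or φ ψ => MuLf.negOcc x φ ∧ MuLf.negOcc x ψ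
  | .and φ ψ => MuLf.negOcc x φ ∧ MuLf.negOcc x ψ
  | .dia _ _ φ => MuLf.negOcc x φ
  | .box _ _ φ => MuLf.negOcc x φ
  | .var y => y ≠ x
  | .mu y φ => y = x ∨ MuLf.negOcc x φ
  | .nu y φ => y = x ∨ MuLf.negOcc x φ
end

/-- Well-formedness: fixpoint-bound variables occur positively. -/
def MuLf.wf : MuLf A X P → Prop
  | .bot => True
  | .top => True
  | .neg φ => MuLf.wf φ
  | .or φ ψ => MuLf.wf φ ∧ MuLf.wf ψ
  | .and φ ψ => MuLf.wf φ ∧ MuLf.wf ψ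
  | .dia _ _ φ => MuLf.wf φ
  | .box _ _ φ => MuLf.wf φ
  | .var _ => True
  | .mu x φ => MuLf.posIn x φ ∧ MuLf.wf φ
  | .nu x φ => MuLf.posIn x φ ∧ MuLf.wf φ

/-- Substitution φ[¬X/X] of ¬X for the free occurrences of X. -/
def MuLf.substNegVar [DecidableEq X] (x : X) : MuLf A X P → MuLf A X P
  | .bot => .bot
  | .top => .top
  | .neg φ => .neg (MuLf.substNegVar x φ)
  | .or φ ψ => .or (MuLf.substNegVar x φ) (MuLf.substNegVar x ψ)
  | .and φ ψ => .and (MuLf.substNegVar x φ) (MuLf.substNegVar x ψ)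
  | .dia a χ φ => .dia a χ (MuLf.substNegVar x φ)
  | .box a χ φ => .box a χ (MuLf.substNegVar x φ)
  | .var y => if y = x then .neg (.var y) else .var y
  | .mu y φ => if y = x then .mu y φ else .mu y (MuLf.substNegVar x φ)
  | .nu y φ => if y = x then .nu y φ else .nu y (MuLf.substNegVar x φ)

/-- Projection from state-family sets to state-product sets. -/
def fp {S P : Type} (W : Set (S × Set P)) : Set (S × P) :=
  {sp | ∃ Pf : Set P, (sp.1, Pf) ∈ W ∧ sp.2 ∈ Pf}



lemma stmt4_aux {S A X P : Type} [DecidableEq X] (F : FTS S A P)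
    (phi : MuLf A X P) :
    ∀ (zeta : X → Set (S × Set P)) (eta : X → Set (S × P)),
    (∀ (x : X) (s : S) (p : P), (s, ({p} : Set P)) ∈ zeta x ↔ (s, p) ∈ eta x) →
    ∀ (s : S) (p : P),
      (s, ({p} : Set P)) ∈ MuLf.fsem F phi zeta ↔ (s, p) ∈ MuLf.sem F phi eta := by
  induction phi with
  | bot => intro ζ η h s p; simp [MuLf.fsem, MuLf.sem]
  | top => intro ζ η h s p; simp [MuLf.fsem, MuLf.sem]
  | neg φ ih => intro ζ η h s p; simp [MuLf.fsem, MuLf.sem, ih ζ η h s p]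
  | or φ ψ ihφ ihψ =>
      intro ζ η h s p
      simp [MuLf.fsem, MuLf.sem, ihφ ζ η h s p, ihψ ζ η h s p]
  | and φ ψ ihφ ihψ =>
      intro ζ η h s p
      simp [MuLf.fsem, MuLf.sem, ihφ ζ η h s p, ihψ ζ η h s p]
  | dia a χ φ ih =>
      intro ζ η h s p
      have hset : ∀ t : S, p ∈ χ → p ∈ F.theta s a t →
          ({p} : Set P) ∩ χ ∩ F.theta s a t = {p} := by
        intro t h1 h2
        ext q
        simp only [Set.mem_inter_iff, Set.mem_singleton_iff]
        constructor
        · rintro ⟨⟨hq, -⟩, -⟩; exact hq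
        · rintro rfl; exact ⟨⟨rfl, h1⟩, h2⟩
      constructor
      · rintro ⟨hχ, t, hθ, hf⟩
        have h1 : p ∈ χ := Set.singleton_subset_iff.mp hχ
        have h2 : p ∈ F.theta s a t := Set.singleton_subset_iff.mp hθ
        rw [hset t h1 h2] at hf
        exact ⟨h1, t, h2, (ih ζ η h t p).mp hf⟩
      · rintro ⟨h1, t, h2, hf⟩
        refine ⟨Set.singleton_subset_iff.mpr h1, t, Set.singleton_subset_iff.mpr h2, ?_⟩
        rw [hset t h1 h2]
        exact (ih ζ η h t p).mpr hf
  | box a χ φ ih =>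
      intro ζ η h s p
      have hne : ∀ B : Set P, (({p} : Set P) ∩ B).Nonempty ↔ p ∈ B := by
        intro B
        constructor
        · rintro ⟨q, hq1, hq2⟩
          rcases hq1 with rfl
          exact hq2
        · intro hp; exact ⟨p, rfl, hp⟩
      have hset : ∀ t : S, p ∈ χ → p ∈ F.theta s a t →
          ({p} : Set P) ∩ χ ∩ F.theta s a t = {p} := by
        intro t h1 h2
        ext q
        simp only [Set.mem_inter_iff, Set.mem_singleton_iff]
        constructor
        · rintro ⟨⟨hq, -⟩, -⟩; exact hq
        · rintro rfl; exact ⟨⟨rfl, h1⟩, h2⟩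
      constructor
      · intro hf h1 t h2
        have hne2 : (({p} : Set P) ∩ χ ∩ F.theta s a t).Nonempty := by
          rw [Set.inter_assoc, hne]; exact ⟨h1, h2⟩
        have := hf ((hne χ).mpr h1) t hne2
        rw [hset t h1 h2] at this
        exact (ih ζ η h t p).mp this
      · intro hf h1 t h2
        have h1' : p ∈ χ := (hne χ).mp h1
        have h2' : p ∈ F.theta s a t := by
          rcases h2 with ⟨q, ⟨⟨hq, -⟩, hq2⟩⟩
          rcases hq with rfl
          exact hq2
        rw [hset t h1' h2']
        exact (ih ζ η h t p).mpr (hf h1' t h2')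
  | var x => intro ζ η h s p; exact h x s p
  | mu x φ ih =>
      intro ζ η h s p
      simp only [MuLf.fsem, MuLf.sem, slfp, Set.mem_sInter, Set.mem_setOf_eq]
      constructor
      · intro hp V hV
        set W : Set (S × Set P) := {tq | ∀ q : P, tq.2 = {q} → (tq.1, q) ∈ V} with hWdef
        have hrelW : ∀ (y : X) (t : S) (q : P),
            (t, ({q} : Set P)) ∈ Function.update ζ x W y ↔
            (t, q) ∈ Function.update η x V y := by
          intro y t q
          rcases eq_or_ne y x with rfl | hyx
          · simp only [Function.update_self]
            constructor
            · intro hw; exact hw q rfl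
            · intro hv q' hq'
              rw [Set.singleton_eq_singleton_iff] at hq'
              rw [← hq']; exact hv
          · simp only [Function.update_of_ne hyx]; exact h y t q
        have hW : MuLf.fsem F φ (Function.update ζ x W) ⊆ W := by
          intro tq htq q hq
          have h2 : (tq.1, ({q} : Set P)) ∈ MuLf.fsem F φ (Function.update ζ x W) := by
            rw [← hq]; exact htq
          exact hV ((ih _ _ hrelW tq.1 q).mp h2)
        exact hp W hW p rfl
      · intro hp W hW
        set V : Set (S × P) := {tq | (tq.1, ({tq.2} : Set P)) ∈ W} with hVdef
        have hrelV : ∀ (y : X) (t : S) (q : P),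
            (t, ({q} : Set P)) ∈ Function.update ζ x W y ↔
            (t, q) ∈ Function.update η x V y := by
          intro y t q
          rcases eq_or_ne y x with rfl | hyx
          · simp only [Function.update_self]; rfl
          · simp only [Function.update_of_ne hyx]; exact h y t q
        have hVpre : MuLf.sem F φ (Function.update η x V) ⊆ V := by
          intro tq htq
          exact hW ((ih _ _ hrelV tq.1 tq.2).mpr htq)
        exact hp V hVpre
  | nu x φ ih =>
      intro ζ η h s p
      simp only [MuLf.fsem, MuLf.sem, sgfp, Set.mem_sUnion, Set.mem_setOf_eq]
      constructor
      · rintro ⟨W, hW, hsW⟩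
        set V : Set (S × P) := {tq | (tq.1, ({tq.2} : Set P)) ∈ W} with hVdef
        have hrelV : ∀ (y : X) (t : S) (q : P),
            (t, ({q} : Set P)) ∈ Function.update ζ x W y ↔
            (t, q) ∈ Function.update η x V y := by
          intro y t q
          rcases eq_or_ne y x with rfl | hyx
          · simp only [Function.update_self]; rfl
          · simp only [Function.update_of_ne hyx]; exact h y t q
        refine ⟨V, ?_, hsW⟩
        intro tq htq
        exact (ih _ _ hrelV tq.1 tq.2).mp (hW htq)
      · rintro ⟨V, hV, hsV⟩
        set W : Set (S × Set P) := {tP | ∃ q : P, tP.2 = {q} ∧ (tP.1, q) ∈ V} with hWdef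
        have hrelW : ∀ (y : X) (t : S) (q : P),
            (t, ({q} : Set P)) ∈ Function.update ζ x W y ↔
            (t, q) ∈ Function.update η x V y := by
          intro y t q
          rcases eq_or_ne y x with rfl | hyx
          · simp only [Function.update_self]
            constructor
            · rintro ⟨q', hq', hv⟩
              rw [Set.singleton_eq_singleton_iff] at hq'
              rw [hq']; exact hv
            · intro hv; exact ⟨q, rfl, hv⟩
          · simp only [Function.update_of_ne hyx]; exact h y t q
        refine ⟨W, ?_, ⟨p, rfl, hsV⟩⟩
        rintro tP ⟨q, hq, hv⟩
        have h2 : (tP.1, ({q} : Set P)) ∈ MuLf.fsem F φ (Function.update ζ x W) :=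
          (ih _ _ hrelW tP.1 q).mpr (hV hv)
        show (tP.1, tP.2) ∈ _
        rw [hq]; exact h2

/-- for singleton families, the family-based semantics of μL'f agrees
with the product-based semantics of μLf (the translation fm is the identity on our
shared syntax, replacing ⟪a|χ⟫ by ⟨a|χ⟩). -/
theorem stmt4 {S A X P : Type} [DecidableEq X] (F : FTS S A P)
    (zeta : X → Set (S × Set P)) (eta : X → Set (S × P))
    (hrel : ∀ (x : X) (s : S) (p : P), (s, ({p} : Set P)) ∈ zeta x ↔ (s, p) ∈ eta x)
    (phi : MuLf A X P) (s : S) (p : P) :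
    (s, ({p} : Set P)) ∈ MuLf.fsem F phi zeta ↔ (s, p) ∈ MuLf.sem F phi eta := by
  exact stmt4_aux F phi zeta eta hrel s p

end SPLmu
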